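/- Let f : ℝ → ℝ be continuous and nonnegative and let y > 0 satisfy f(y) + 2·f(2y) > 0. Then, as ε → 0⁺, the ratio (−(1/2)∫_{y−ε}^{y+ε} x·f(x) dx + (1/2)∫_{2y−2ε}^{2y+2ε} x·f(x) dx) / (∫_{y−ε}^{y+ε} f(x) dx + ∫_{2y−2ε}^{2y+2ε} f(x) dx) tends to (−y·f(y) + 4y·f(2y)) / (2·f(y) + 4·f(2y)). -/

import Mathlib

open MeasureTheory Filter

/-- Basic averaging lemma: for continuous `g`, `(∫_{a-ε}^{a+ε} g)/ε → 2 g(a)` as `ε → 0⁺`. -/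
lemma avg_tendsto_aux (g : ℝ → ℝ) (hg : Continuous g) (a : ℝ) :
    Tendsto (fun ε => (∫ x in (a-ε)..(a+ε), g x)/ε) (nhdsWithin 0 (Set.Ioi 0))
      (nhds (2 * g a)) := by
  set G : ℝ → ℝ := fun t => ∫ x in a..t, g x with hGdef
  have hG : ∀ t, HasDerivAt G (g t) t := fun t =>
    intervalIntegral.integral_hasDerivAt_right (hg.intervalIntegrable _ _)
      (hg.stronglyMeasurableAtFilter _ _) hg.continuousAt
  have h1 : HasDerivAt (fun ε : ℝ => G (a + ε)) (g a * 1) 0 := by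
    have := (hG (a + 0)).comp 0 ((hasDerivAt_id 0).const_add a)
    simpa [Function.comp_def] using this
  have h2 : HasDerivAt (fun ε : ℝ => G (a - ε)) (g a * (-1)) 0 := by
    have := (hG (a - 0)).comp 0 ((hasDerivAt_id 0).const_sub a)
    simpa [Function.comp_def] using this
  have h3 : HasDerivAt (fun ε : ℝ => G (a + ε) - G (a - ε)) (2 * g a) 0 := by
    have := h1.sub h2
    rw [show (2 * g a) = g a * 1 - g a * (-1) by ring]; exact this
  have h4 := hasDerivAt_iff_tendsto_slope.mp h3
  have h5 : Tendsto (slope (fun ε : ℝ => G (a + ε) - G (a - ε)) 0)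
      (nhdsWithin 0 (Set.Ioi 0)) (nhds (2 * g a)) :=
    h4.mono_left (nhdsWithin_mono _ (fun x hx => ne_of_gt hx))
  refine h5.congr' ?_
  filter_upwards [self_mem_nhdsWithin] with ε hε
  have heq : G (a + ε) - G (a - ε) = ∫ x in (a-ε)..(a+ε), g x := by
    rw [hGdef]
    rw [← intervalIntegral.integral_add_adjacent_intervals (a := a - ε) (b := a) (c := a + ε)
      (hg.intervalIntegrable _ _) (hg.intervalIntegrable _ _)]
    simp [intervalIntegral.integral_symm (a-ε) a]
    ring
  simp [slope, heq, div_eq_inv_mul]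

/-- Scaled averaging: for continuous `g`, `(∫_{a-2ε}^{a+2ε} g)/ε → 4 g(a)` as `ε → 0⁺`. -/
lemma avg_tendsto_aux2 (g : ℝ → ℝ) (hg : Continuous g) (a : ℝ) :
    Tendsto (fun ε => (∫ x in (a-2*ε)..(a+2*ε), g x)/ε) (nhdsWithin 0 (Set.Ioi 0))
      (nhds (4 * g a)) := by
  have hmap : Tendsto (fun ε : ℝ => 2 * ε) (nhdsWithin 0 (Set.Ioi 0))
      (nhdsWithin 0 (Set.Ioi 0)) := by
    apply tendsto_nhdsWithin_of_tendsto_nhds_of_eventually_within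
    · have : Tendsto (fun ε : ℝ => 2 * ε) (nhds 0) (nhds (2 * 0)) :=
        (tendsto_id.const_mul 2)
      simpa using this.mono_left nhdsWithin_le_nhds
    · filter_upwards [self_mem_nhdsWithin] with ε hε
      exact mul_pos two_pos (Set.mem_Ioi.mp hε)
  have h := (avg_tendsto_aux g hg a).comp hmap
  have h2 : Tendsto (fun ε => 2 * ((∫ x in (a-2*ε)..(a+2*ε), g x)/(2*ε)))
      (nhdsWithin 0 (Set.Ioi 0)) (nhds (2 * (2 * g a))) := h.const_mul 2
  have h3 : ∀ ε : ℝ, 2 * ((∫ x in (a-2*ε)..(a+2*ε), g x)/(2*ε))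
      = (∫ x in (a-2*ε)..(a+2*ε), g x)/ε := by
    intro ε
    rw [mul_div_assoc']
    exact mul_div_mul_left _ _ two_ne_zero
  have h4 : (2 : ℝ) * (2 * g a) = 4 * g a := by ring
  rw [h4] at h2
  exact h2.congr h3

/-- Halving-only strategy: the expected benefit of switching, given the observed
content lies in `(y - ε, y + ε]`, tends to
`(-y f(y) + 4y f(2y)) / (2 f(y) + 4 f(2y))` as `ε → 0⁺`. -/
theorem halving_only_expected_benefit (f : ℝ → ℝ) (hf : Continuous f)
    (hf0 : ∀ x, 0 ≤ f x) (y : ℝ) (hy : 0 < y)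
    (hpos : 0 < f y + 2 * f (2 * y)) :
    Tendsto (fun ε : ℝ =>
        (-(1 / 2) * (∫ x in (y - ε)..(y + ε), x * f x) +
            (1 / 2) * ∫ x in (2 * y - 2 * ε)..(2 * y + 2 * ε), x * f x) /
          ((∫ x in (y - ε)..(y + ε), f x) +
            ∫ x in (2 * y - 2 * ε)..(2 * y + 2 * ε), f x))
      (nhdsWithin 0 (Set.Ioi 0))
      (nhds ((-y * f y + 4 * y * f (2 * y)) / (2 * f y + 4 * f (2 * y)))) := by
  set g : ℝ → ℝ := fun x => x * f x with hgdef
  have hg : Continuous g := continuous_id.mul hf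
  -- numerator over ε
  have hnum : Tendsto (fun ε : ℝ =>
      (-(1 / 2) * (∫ x in (y - ε)..(y + ε), g x) +
        (1 / 2) * ∫ x in (2 * y - 2 * ε)..(2 * y + 2 * ε), g x) / ε)
      (nhdsWithin 0 (Set.Ioi 0)) (nhds (-y * f y + 4 * y * f (2 * y))) := by
    have h1 := (avg_tendsto_aux g hg y).const_mul (-(1/2) : ℝ)
    have h2 := (avg_tendsto_aux2 g hg (2*y)).const_mul ((1/2) : ℝ)
    have h := h1.add h2
    have hval : -(1/2 : ℝ) * (2 * g y) + 1/2 * (4 * g (2*y))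
        = -y * f y + 4 * y * f (2 * y) := by
      simp only [hgdef]; ring
    rw [hval] at h
    refine h.congr fun ε => ?_
    ring
  -- denominator over ε
  have hden : Tendsto (fun ε : ℝ =>
      ((∫ x in (y - ε)..(y + ε), f x) +
        ∫ x in (2 * y - 2 * ε)..(2 * y + 2 * ε), f x) / ε)
      (nhdsWithin 0 (Set.Ioi 0)) (nhds (2 * f y + 4 * f (2 * y))) := by
    have h := (avg_tendsto_aux f hf y).add (avg_tendsto_aux2 f hf (2*y))
    refine h.congr fun ε => ?_
    rw [add_div]
  have hden_ne : (2 * f y + 4 * f (2 * y)) ≠ 0 := by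
    have : 0 < 2 * f y + 4 * f (2 * y) := by linarith
    exact ne_of_gt this
  have hdiv := hnum.div hden hden_ne
  refine hdiv.congr' ?_
  filter_upwards [self_mem_nhdsWithin] with ε hε
  have hεne : (ε : ℝ) ≠ 0 := ne_of_gt hε
  set A : ℝ := -(1 / 2) * (∫ x in (y - ε)..(y + ε), x * f x) +
      (1 / 2) * ∫ x in (2 * y - 2 * ε)..(2 * y + 2 * ε), x * f x
  set B : ℝ := (∫ x in (y - ε)..(y + ε), f x) +
      ∫ x in (2 * y - 2 * ε)..(2 * y + 2 * ε), f x
  show (A / ε) / (B / ε) = A / B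
  by_cases hB : B = 0
  · simp [hB]
  · field_simp
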